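/- Let X, Y be 2N×2N complex matrices with X^p = Y^q = -I. Then the 3-term complex 0 → ℂ^{2N} →^{∂₂} ℂ^{2N} ⊕ ℂ^{2N} →^{∂₁} ℂ^{2N} → 0 with ∂₂ = (I + X + ⋯ + X^{p-1}, -(I + Y + ⋯ + Y^{q-1}))ᵀ and ∂₁ = (X - I, Y - I) is exact. -/

import Mathlib

open Matrix Finset

theorem stmt_16 (N p q : ℕ) (hp : 0 < p) (hq : 0 < q)
    (X Y : Matrix (Fin (2 * N)) (Fin (2 * N)) ℂ)
    (hX : X ^ p = -1) (hY : Y ^ q = -1) :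
    Function.Injective
      (fun v : Fin (2 * N) → ℂ =>
        ((∑ i ∈ Finset.range p, X ^ i).mulVec v,
          -((∑ i ∈ Finset.range q, Y ^ i).mulVec v))) ∧
    Function.Surjective
      (fun uw : (Fin (2 * N) → ℂ) × (Fin (2 * N) → ℂ) =>
        (X - 1).mulVec uw.1 + (Y - 1).mulVec uw.2) ∧
    {uw : (Fin (2 * N) → ℂ) × (Fin (2 * N) → ℂ) |
        (X - 1).mulVec uw.1 + (Y - 1).mulVec uw.2 = 0} =
      Set.range
        (fun v : Fin (2 * N) → ℂ =>
          ((∑ i ∈ Finset.range p, X ^ i).mulVec v,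
            -((∑ i ∈ Finset.range q, Y ^ i).mulVec v))) := by
  set S : Matrix (Fin (2*N)) (Fin (2*N)) ℂ := ∑ i ∈ Finset.range p, X ^ i with hS
  set T : Matrix (Fin (2*N)) (Fin (2*N)) ℂ := ∑ i ∈ Finset.range q, Y ^ i with hT
  have htwo : ∀ x : Matrix (Fin (2*N)) (Fin (2*N)) ℂ, x = -1 → x - 1 = -2 := by
    intro x hx
    rw [hx]
    simp only [sub_eq_add_neg, ← neg_add, one_add_one_eq_two]
  have hXS : (X - 1) * S = -2 := by rw [hS, mul_geom_sum, htwo _ hX]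
  have hSX : S * (X - 1) = -2 := by rw [hS, geom_sum_mul, htwo _ hX]
  have hYT : (Y - 1) * T = -2 := by rw [hT, mul_geom_sum, htwo _ hY]
  have hTY : T * (Y - 1) = -2 := by rw [hT, geom_sum_mul, htwo _ hY]
  have key : ∀ (A : Matrix (Fin (2*N)) (Fin (2*N)) ℂ) (v : Fin (2*N) → ℂ),
      A = -2 → A.mulVec v = (-2 : ℂ) • v := by
    intro A v h
    have : A = (-2 : ℂ) • (1 : Matrix (Fin (2*N)) (Fin (2*N)) ℂ) := by
      rw [h, show ((-2:ℂ)) = -(2:ℂ) by norm_num, neg_smul, two_smul, one_add_one_eq_two]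
    rw [this, smul_mulVec, one_mulVec]
  refine ⟨?_, ?_, ?_⟩
  · intro v₁ v₂ h
    have h1 : S.mulVec v₁ = S.mulVec v₂ := congrArg Prod.fst h
    have h2 : (X - 1).mulVec (S.mulVec v₁) = (X - 1).mulVec (S.mulVec v₂) := by rw [h1]
    rw [mulVec_mulVec, mulVec_mulVec, key _ _ hXS, key _ _ hXS] at h2
    exact smul_right_injective _ (by norm_num) h2
  · intro w
    refine ⟨⟨(-(1/2 : ℂ)) • S.mulVec w, 0⟩, ?_⟩
    simp only [mulVec_zero, add_zero, mulVec_smul, mulVec_mulVec, key _ _ hXS]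
    rw [smul_smul]; norm_num
  · ext uw
    simp only [Set.mem_setOf_eq, Set.mem_range]
    constructor
    · intro h
      refine ⟨(-(1/2 : ℂ)) • (X - 1).mulVec uw.1, ?_⟩
      have hw : (X - 1).mulVec uw.1 = -((Y - 1).mulVec uw.2) := by
        rw [eq_neg_iff_add_eq_zero]; exact h
      have h1 : S.mulVec ((-(1/2 : ℂ)) • (X - 1).mulVec uw.1) = uw.1 := by
        rw [mulVec_smul, mulVec_mulVec, key _ _ hSX, smul_smul]
        norm_num
      have h2 : -(T.mulVec ((-(1/2 : ℂ)) • (X - 1).mulVec uw.1)) = uw.2 := by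
        rw [hw, mulVec_smul, mulVec_neg, mulVec_mulVec, key _ _ hTY]
        module
      exact Prod.ext h1 h2
    · rintro ⟨v, hv⟩
      rw [← hv]
      simp only [mulVec_neg, mulVec_mulVec, hXS, hYT]
      abel
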